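/- Let a < b be real numbers, let p ≥ 1 and q ≥ 1 be integers with q ≤ p+1, and let h > 0 be such that (b−a)/h is a positive integer. Then every spline u ∈ S̃^{(q)}_{p,h}(a,b) satisfies |u|_{H^q(a,b)} ≤ 2√3 · h^{−1} · |u|_{H^{q−1}(a,b)}. -/

import Mathlib

open MeasureTheory Set
open Polynomial intervalIntegral Topology Filter

/-- The `L²(a,b)` norm of a function. -/
noncomputable def L2 (a b : ℝ) (v : ℝ → ℝ) : ℝ :=
  Real.sqrt (∫ x in Set.Ioo a b, v x ^ 2)

/-- `u` belongs to the spline space `S_{p,h}(a,b)` of maximum smoothness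
(`u` is `(p-1)`-times continuously differentiable on `[a,b]` and coincides with a
polynomial of degree at most `p` on each of the `n = (b-a)/h` subintervals). -/
def IsSplineOn (p n : ℕ) (h a b : ℝ) (u : ℝ → ℝ) : Prop :=
  ContDiffOn ℝ (p - 1 : ℕ) u (Set.Icc a b) ∧
  ∀ j < n, ∃ P : Polynomial ℝ, P.natDegree ≤ p ∧
    ∀ x ∈ Set.Icc (a + j * h) (a + (j + 1) * h), u x = P.eval x

/-- `u ∈ H¹(a,b)` with weak derivative `g`: `u` is absolutely continuous on `[a,b]`
(an indefinite integral of the locally integrable `g`) and `g` is square-integrable. -/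
def IsH1On (a b : ℝ) (u g : ℝ → ℝ) : Prop :=
  IntervalIntegrable g volume a b ∧
  (∀ x ∈ Set.Icc a b, u x = u a + ∫ t in a..x, g t) ∧
  IntegrableOn (fun x => g x ^ 2) (Set.Ioo a b)

/-- The reduced spline space `S̃^{(q)}_{p,h}(a,b)`: splines whose derivatives of order
`2l+q < p` vanish at both endpoints. -/
def IsReducedSplineQOn (q p n : ℕ) (h a b : ℝ) (u : ℝ → ℝ) : Prop :=
  IsSplineOn p n h a b u ∧
  ∀ l : ℕ, 2 * l + q < p →
    iteratedDerivWithin (2 * l + q) u (Set.Icc a b) a = 0 ∧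
    iteratedDerivWithin (2 * l + q) u (Set.Icc a b) b = 0

/-- Theorem 6 of the paper: inverse inequality in higher Sobolev
semi-norms for the reduced spline space `S̃^{(q)}_{p,h}(a,b)`. -/
lemma iterate_deriv_succ' (P : Polynomial ℝ) (r : ℕ) (hr : 1 ≤ r) :
    Polynomial.derivative^[r] P = Polynomial.derivative (Polynomial.derivative^[r-1] P) := by
  conv_lhs => rw [show r = (r-1)+1 from (Nat.sub_add_cancel hr).symm]
  rw [Function.iterate_succ_apply']

lemma iteratedDeriv_polyeval (P : Polynomial ℝ) (k : ℕ) :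
    iteratedDeriv k (fun x => P.eval x) = fun x => (Polynomial.derivative^[k] P).eval x := by
  induction k with
  | zero => simp
  | succ k ih =>
    rw [iteratedDeriv_succ, ih]
    funext x
    rw [Function.iterate_succ_apply']
    exact Polynomial.deriv (p := Polynomial.derivative^[k] P)

lemma poly_ibp (P : Polynomial ℝ) (r : ℕ) (hr : 1 ≤ r) (s t : ℝ) :
    ∫ x in s..t, ((Polynomial.derivative^[r] P).eval x)^2
      = (Polynomial.derivative^[r-1] P).eval t * (Polynomial.derivative^[r] P).eval t
        - (Polynomial.derivative^[r-1] P).eval s * (Polynomial.derivative^[r] P).eval s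
        - ∫ x in s..t, (Polynomial.derivative^[r-1] P).eval x * (Polynomial.derivative^[r+1] P).eval x := by
  set Q := Polynomial.derivative^[r-1] P with hQ
  have h1 : Polynomial.derivative^[r] P = Polynomial.derivative Q := iterate_deriv_succ' P r hr
  have h2 : Polynomial.derivative^[r+1] P = Polynomial.derivative (Polynomial.derivative Q) := by
    rw [Function.iterate_succ_apply', h1]
  rw [h1, h2]
  have key : ∫ x in s..t, ((Polynomial.derivative Q).eval x ^ 2
      + Q.eval x * (Polynomial.derivative (Polynomial.derivative Q)).eval x)
      = Q.eval t * (Polynomial.derivative Q).eval t - Q.eval s * (Polynomial.derivative Q).eval s := by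
    apply intervalIntegral.integral_eq_sub_of_hasDerivAt
    · intro x _
      have := (Q.hasDerivAt x).mul ((Polynomial.derivative Q).hasDerivAt x)
      convert this using 1
      · rfl
      · rfl
      · ring
    · exact (((Polynomial.derivative Q).continuous.pow 2).add
        (Q.continuous.mul (Polynomial.derivative (Polynomial.derivative Q)).continuous)).intervalIntegrable _ _
  have hi1 : IntervalIntegrable (fun x => ((Polynomial.derivative Q).eval x)^2) volume s t :=
    ((Polynomial.derivative Q).continuous.pow 2).intervalIntegrable _ _
  have hi2 : IntervalIntegrable (fun x => Q.eval x * (Polynomial.derivative (Polynomial.derivative Q)).eval x) volume s t :=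
    (Q.continuous.mul (Polynomial.derivative (Polynomial.derivative Q)).continuous).intervalIntegrable _ _
  rw [intervalIntegral.integral_add hi1 hi2] at key
  linarith

lemma linear_sq_integral (c0 c1 s t : ℝ) :
    ∫ x in s..t, (c0 + c1 * x)^2
      = (c0^2*t + c0*c1*t^2 + c1^2*t^3/3) - (c0^2*s + c0*c1*s^2 + c1^2*s^3/3) := by
  apply intervalIntegral.integral_eq_sub_of_hasDerivAt
  · intro x _
    have h1 := (hasDerivAt_pow 2 x).const_mul (c0*c1)
    have h2 := ((hasDerivAt_pow 3 x).const_mul (c1^2)).div_const 3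
    have h3 := (hasDerivAt_id x).const_mul (c0^2)
    convert (h3.add h1).add h2 using 1
    · rfl
    · push_cast
      ring
  · exact ((continuous_const.add (continuous_const.mul continuous_id)).pow 2).intervalIntegrable _ _

lemma linear_inverse (L : Polynomial ℝ) (hL : L.natDegree ≤ 1) (s h : ℝ) (hh : 0 < h) :
    ∫ x in s..(s+h), (L.derivative.eval x)^2 ≤ 12 / h^2 * ∫ x in s..(s+h), (L.eval x)^2 := by
  set c1 := L.coeff 1
  set c0 := L.coeff 0
  have hLe : L = C c1 * X + C c0 := Polynomial.eq_X_add_C_of_natDegree_le_one hL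
  have hd : L.derivative = C c1 := by rw [hLe]; simp
  have e1 : ∫ x in s..(s+h), (L.derivative.eval x)^2 = c1^2 * h := by
    rw [hd]
    simp [intervalIntegral.integral_const]
    ring
  have e2 : ∫ x in s..(s+h), (L.eval x)^2 = ∫ x in s..(s+h), (c0 + c1 * x)^2 := by
    apply intervalIntegral.integral_congr
    intro x _
    rw [hLe]; simp; ring
  rw [e1, e2, linear_sq_integral]
  rw [div_mul_eq_mul_div, le_div_iff₀ (by positivity)]
  nlinarith [sq_nonneg (2*c0 + c1*(2*s+h)), hh.le, mul_nonneg (mul_nonneg hh.le hh.le) (sq_nonneg (2*c0 + c1*(2*s+h)))]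

lemma sum_cs (n : ℕ) (x : ℕ → ℝ) (hx : ∀ j, x j ≤ x (j+1)) (f g : ℕ → ℝ → ℝ)
    (hf : ∀ j, Continuous (f j)) (hg : ∀ j, Continuous (g j)) :
    (∑ j ∈ Finset.range n, ∫ t in x j..x (j+1), f j t * g j t)^2
      ≤ (∑ j ∈ Finset.range n, ∫ t in x j..x (j+1), (f j t)^2)
        * (∑ j ∈ Finset.range n, ∫ t in x j..x (j+1), (g j t)^2) := by
  set A := ∑ j ∈ Finset.range n, ∫ t in x j..x (j+1), (g j t)^2 with hA
  set B := ∑ j ∈ Finset.range n, ∫ t in x j..x (j+1), f j t * g j t with hB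
  set C := ∑ j ∈ Finset.range n, ∫ t in x j..x (j+1), (f j t)^2 with hC
  have expand : ∀ r : ℝ, ∀ j, (∫ t in x j..x (j+1), (f j t + r * g j t)^2)
      = (∫ t in x j..x (j+1), (g j t)^2)*(r*r)
        + (2*(∫ t in x j..x (j+1), f j t * g j t))*r + (∫ t in x j..x (j+1), (f j t)^2) := by
    intro r j
    have i1 : IntervalIntegrable (fun t => (f j t)^2) volume (x j) (x (j+1)) :=
      ((hf j).pow 2).intervalIntegrable _ _
    have i2 : IntervalIntegrable (fun t => (g j t)^2) volume (x j) (x (j+1)) :=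
      ((hg j).pow 2).intervalIntegrable _ _
    have i3 : IntervalIntegrable (fun t => f j t * g j t) volume (x j) (x (j+1)) :=
      ((hf j).mul (hg j)).intervalIntegrable _ _
    rw [show ((∫ t in x j..x (j+1), (g j t)^2)*(r*r)
        + (2*(∫ t in x j..x (j+1), f j t * g j t))*r + (∫ t in x j..x (j+1), (f j t)^2))
      = ((∫ t in x j..x (j+1), (r*r) * (g j t)^2)
        + (∫ t in x j..x (j+1), (2*r) * (f j t * g j t)) + (∫ t in x j..x (j+1), (f j t)^2)) by
      rw [intervalIntegral.integral_const_mul, intervalIntegral.integral_const_mul]; ring]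
    rw [← intervalIntegral.integral_add (i2.const_mul _) (i3.const_mul _),
      ← intervalIntegral.integral_add ((i2.const_mul _).add (i3.const_mul _)) i1]
    apply intervalIntegral.integral_congr
    intro t _
    ring
  have key : ∀ r : ℝ, 0 ≤ A * (r * r) + (2*B) * r + C := by
    intro r
    have he : A * (r * r) + (2*B) * r + C
        = ∑ j ∈ Finset.range n, ∫ t in x j..x (j+1), (f j t + r * g j t)^2 := by
      simp only [expand r, Finset.sum_add_distrib, ← Finset.sum_mul, hA, hB, hC, Finset.mul_sum]
    rw [he]
    apply Finset.sum_nonneg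
    intro j _
    exact intervalIntegral.integral_nonneg (hx j) (fun t _ => sq_nonneg _)
  have hdis := discrim_le_zero key
  rw [discrim] at hdis
  nlinarith

lemma key_poly (a h : ℝ) (hh : 0 < h) (n p q : ℕ) (hn : 0 < n) (hp : 1 ≤ p) (hq : 1 ≤ q)
    (hqp : q ≤ p + 1) (P : ℕ → Polynomial ℝ)
    (hdeg : ∀ j, (P j).natDegree ≤ p)
    (hiface : ∀ j, j + 1 < n → ∀ k, k < p →
      (Polynomial.derivative^[k] (P j)).eval (a + (j+1 : ℕ) * h)
        = (Polynomial.derivative^[k] (P (j+1))).eval (a + (j+1 : ℕ) * h))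
    (hbca : ∀ l, 2*l + q < p → (Polynomial.derivative^[2*l+q] (P 0)).eval a = 0)
    (hbcb : ∀ l, 2*l + q < p → (Polynomial.derivative^[2*l+q] (P (n-1))).eval (a + (n : ℕ) * h) = 0) :
    (∑ j ∈ Finset.range n, ∫ t in (a+(j : ℕ)*h)..(a+(j+1 : ℕ)*h),
        ((Polynomial.derivative^[q] (P j)).eval t)^2)
      ≤ 12 / h^2 * ∑ j ∈ Finset.range n, ∫ t in (a+(j : ℕ)*h)..(a+(j+1 : ℕ)*h),
        ((Polynomial.derivative^[q-1] (P j)).eval t)^2 := by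
  set x : ℕ → ℝ := fun j => a + (j : ℕ) * h with hxdef
  have hx : ∀ j, x j ≤ x (j+1) := by
    intro j; simp only [hxdef]; push_cast; nlinarith
  set A : ℕ → ℝ := fun r => ∑ j ∈ Finset.range n, ∫ t in x j..x (j+1),
      ((Polynomial.derivative^[r] (P j)).eval t)^2 with hAdef
  have hA0 : ∀ r, 0 ≤ A r := by
    intro r
    apply Finset.sum_nonneg
    intro j _
    exact intervalIntegral.integral_nonneg (hx j) (fun t _ => sq_nonneg _)
  -- base case : A p ≤ 12/h² A (p-1)
  have hbase : A p ≤ 12 / h^2 * A (p-1) := by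
    rw [hAdef]
    simp only [Finset.mul_sum]
    apply Finset.sum_le_sum
    intro j _
    have hL : (Polynomial.derivative^[p-1] (P j)).natDegree ≤ 1 := by
      have := Polynomial.natDegree_iterate_derivative (P j) (p-1)
      have h2 := hdeg j
      omega
    have := linear_inverse (Polynomial.derivative^[p-1] (P j)) hL (x j) h hh
    rw [← iterate_deriv_succ' (P j) p hp] at this
    have hxx : x j + h = x (j+1) := by simp only [hxdef]; push_cast; ring
    rwa [hxx] at this
  -- derivative vanishing at endpoints for suitable parity
  have hprod0 : ∀ r, q ≤ r → r < p →
      (Polynomial.derivative^[r-1] (P 0)).eval (x 0) * (Polynomial.derivative^[r] (P 0)).eval (x 0) = 0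
      ∧ (Polynomial.derivative^[r-1] (P (n-1))).eval (x n) * (Polynomial.derivative^[r] (P (n-1))).eval (x n) = 0 := by
    intro r hqr hrp
    have hx0 : x 0 = a := by simp [hxdef]
    rcases Nat.even_or_odd (r - q) with he | ho
    · obtain ⟨l, hl⟩ := he
      have hrl : r = 2*l + q := by omega
      have h1 := hbca l (by omega)
      have h2 := hbcb l (by omega)
      rw [← hrl] at h1 h2
      constructor
      · rw [hx0, h1, mul_zero]
      · rw [h2, mul_zero]
    · obtain ⟨l, hl⟩ := ho
      have hrl : r - 1 = 2*l + q := by omega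
      have h1 := hbca l (by omega)
      have h2 := hbcb l (by omega)
      rw [← hrl] at h1 h2
      constructor
      · rw [hx0, h1, zero_mul]
      · rw [h2, zero_mul]
  -- integration by parts + telescoping : A r = -(mixed sum)
  have hibp : ∀ r, q ≤ r → r < p →
      A r = - ∑ j ∈ Finset.range n, ∫ t in x j..x (j+1),
        (Polynomial.derivative^[r-1] (P j)).eval t * (Polynomial.derivative^[r+1] (P j)).eval t := by
    intro r hqr hrp
    have hr1 : 1 ≤ r := le_trans hq hqr
    set G : ℕ → ℝ := fun j => (Polynomial.derivative^[r-1] (P (min j (n-1)))).eval (x j)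
      * (Polynomial.derivative^[r] (P (min j (n-1)))).eval (x j) with hGdef
    have step : ∀ j ∈ Finset.range n, (∫ t in x j..x (j+1),
        ((Polynomial.derivative^[r] (P j)).eval t)^2)
        = (G (j+1) - G j) - ∫ t in x j..x (j+1),
          (Polynomial.derivative^[r-1] (P j)).eval t * (Polynomial.derivative^[r+1] (P j)).eval t := by
      intro j hj
      rw [Finset.mem_range] at hj
      rw [poly_ibp (P j) r hr1 (x j) (x (j+1))]
      have hGj : G j = (Polynomial.derivative^[r-1] (P j)).eval (x j)
          * (Polynomial.derivative^[r] (P j)).eval (x j) := by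
        have : min j (n-1) = j := by omega
        rw [hGdef]; simp only [this]
      have hGj1 : G (j+1) = (Polynomial.derivative^[r-1] (P j)).eval (x (j+1))
          * (Polynomial.derivative^[r] (P j)).eval (x (j+1)) := by
        rcases Nat.lt_or_ge (j+1) n with hlt | hge
        · have : min (j+1) (n-1) = j+1 := by omega
          rw [hGdef]; simp only [this]
          have e1 := hiface j hlt (r-1) (by omega)
          have e2 := hiface j hlt r hrp
          have hxj : x (j+1) = a + (j+1 : ℕ) * h := rfl
          rw [hxj, ← e1, ← e2]
        · have hjn : j + 1 = n := by omega
          have : min (j+1) (n-1) = j := by omega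
          rw [hGdef]; simp only [this]
      rw [hGj, hGj1]
    show (∑ j ∈ Finset.range n, ∫ t in x j..x (j+1), ((Polynomial.derivative^[r] (P j)).eval t)^2) = _
    rw [Finset.sum_congr rfl step, Finset.sum_sub_distrib, Finset.sum_range_sub G, ]
    have hG0 : G 0 = 0 := by
      rw [hGdef]
      simp only [Nat.min_eq_left (by omega : 0 ≤ n - 1)]
      have := (hprod0 r hqr hrp).1
      simpa using this
    have hGn : G n = 0 := by
      rw [hGdef]
      have : min n (n-1) = n - 1 := by omega
      simp only [this]
      exact (hprod0 r hqr hrp).2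
    rw [hG0, hGn]
    ring
  -- Cauchy-Schwarz step : A r ^ 2 ≤ A (r-1) * A (r+1)
  have hcs : ∀ r, q ≤ r → r < p → A r ^ 2 ≤ A (r-1) * A (r+1) := by
    intro r hqr hrp
    have := sum_cs n x hx
      (fun j t => (Polynomial.derivative^[r-1] (P j)).eval t)
      (fun j t => (Polynomial.derivative^[r+1] (P j)).eval t)
      (fun j => (Polynomial.derivative^[r-1] (P j)).continuous)
      (fun j => (Polynomial.derivative^[r+1] (P j)).continuous)
    rw [hibp r hqr hrp, neg_pow]
    simpa [hAdef] using this
  -- the chain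
  have chain : ∀ d r, r + d = p → q ≤ r → A r ≤ 12 / h^2 * A (r-1) := by
    intro d
    induction d with
    | zero =>
      intro r hrd _
      have : r = p := by omega
      subst this
      exact hbase
    | succ d ih =>
      intro r hrd hqr
      have hrp : r < p := by omega
      have h2 := hcs r hqr hrp
      have h3 : A (r+1) ≤ 12 / h^2 * A r := by
        have := ih (r+1) (by omega) (by omega)
        simpa using this
      rcases eq_or_lt_of_le (hA0 r) with h0 | h0
      · rw [← h0]
        exact mul_nonneg (by positivity) (hA0 _)
      · have h4 : A r * A r ≤ (12 / h^2 * A (r-1)) * A r := by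
          nlinarith [hA0 (r-1), hA0 (r+1)]
        exact le_of_mul_le_mul_right h4 h0
  -- conclude
  rcases Nat.lt_or_ge q (p+1) with hlt | hge
  · exact chain (p - q) q (by omega) le_rfl
  · have hqp1 : q = p + 1 := by omega
    have hz : A q = 0 := by
      apply Finset.sum_eq_zero
      intro j _
      have : Polynomial.derivative^[q] (P j) = 0 := by
        apply Polynomial.iterate_derivative_eq_zero
        have := hdeg j
        omega
      rw [this]
      simp
    rw [show (∑ j ∈ Finset.range n, ∫ t in (a+(j : ℕ)*h)..(a+(j+1 : ℕ)*h),
        ((Polynomial.derivative^[q] (P j)).eval t)^2) = A q from rfl, hz]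
    exact mul_nonneg (by positivity) (hA0 _)

theorem higher_sobolev_inverse_inequality (a b h : ℝ) (p q n : ℕ)
    (hab : a < b) (hp : 1 ≤ p) (hq : 1 ≤ q) (hqp : q ≤ p + 1)
    (hh : 0 < h) (hn : 0 < n) (hgrid : b - a = n * h)
    (u : ℝ → ℝ) (hu : IsReducedSplineQOn q p n h a b u) :
    L2 a b (iteratedDeriv q u) ≤ 2 * Real.sqrt 3 * h⁻¹ * L2 a b (iteratedDeriv (q - 1) u) := by
  obtain ⟨⟨hsmooth, hpoly⟩, hbc⟩ := hu
  choose P0 hP0 using hpoly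
  set P : ℕ → Polynomial ℝ := fun j => if hj : j < n then P0 j hj else 0 with hPdef
  have hdeg : ∀ j, (P j).natDegree ≤ p := by
    intro j; by_cases hj : j < n
    · simp only [hPdef, dif_pos hj]; exact (hP0 j hj).1
    · simp only [hPdef, dif_neg hj, Polynomial.natDegree_zero]; omega
  set x : ℕ → ℝ := fun j => a + (j : ℕ) * h with hxdef
  have hx0 : x 0 = a := by simp [hxdef]
  have hxn : x n = b := by simp only [hxdef]; linarith
  have hxlt : ∀ j, x j < x (j+1) := by
    intro j; simp only [hxdef]; push_cast; nlinarith
  have hxa : ∀ j, a ≤ x j := by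
    intro j; simp only [hxdef]
    have : (0:ℝ) ≤ (j:ℝ) * h := by positivity
    linarith
  have hxb : ∀ j, j ≤ n → x j ≤ b := by
    intro j hj
    have : (j : ℝ) ≤ n := by exact_mod_cast hj
    simp only [hxdef]; nlinarith
  have hueq : ∀ j, j < n → ∀ t ∈ Icc (x j) (x (j+1)), u t = (P j).eval t := by
    intro j hj t ht
    simp only [hPdef, dif_pos hj]
    apply (hP0 j hj).2 t
    have : x (j+1) = a + ((j : ℝ) + 1) * h := by
      simp only [hxdef]; push_cast; ring
    rw [← this]
    exact ht
  have hderiv : ∀ k j, j < n → ∀ t ∈ Ioo (x j) (x (j+1)),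
      iteratedDeriv k u t = (Polynomial.derivative^[k] (P j)).eval t := by
    intro k j hj t ht
    have hmem : Icc (x j) (x (j+1)) ∈ 𝓝 t := Icc_mem_nhds ht.1 ht.2
    have hev : u =ᶠ[𝓝 t] fun s => (P j).eval s := by
      filter_upwards [hmem] with s hs
      exact hueq j hj s hs
    rw [hev.iteratedDeriv_eq k, iteratedDeriv_polyeval]
  -- decomposition of the L² integrals
  have hdecomp : ∀ k, (∫ t in Ioo a b, (iteratedDeriv k u t)^2)
      = ∑ j ∈ Finset.range n, ∫ t in x j..x (j+1),
          ((Polynomial.derivative^[k] (P j)).eval t)^2 := by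
    intro k
    have hne : ∀ j : ℕ, ∀ᵐ t : ℝ, t ≠ x (j+1) := by
      intro j
      rw [ae_iff]
      convert Real.volume_singleton (a := x (j+1)) using 2
      ext t; simp
    have haeq : ∀ j, j < n → ∀ᵐ t : ℝ, t ∈ Set.uIoc (x j) (x (j+1)) →
        (iteratedDeriv k u t)^2 = ((Polynomial.derivative^[k] (P j)).eval t)^2 := by
      intro j hj
      filter_upwards [hne j] with t htne hmem
      rw [uIoc_of_le (hxlt j).le] at hmem
      rw [hderiv k j hj t ⟨hmem.1, lt_of_le_of_ne hmem.2 htne⟩]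
    have hpiece : ∀ j, j < n → (∫ t in x j..x (j+1), (iteratedDeriv k u t)^2)
        = ∫ t in x j..x (j+1), ((Polynomial.derivative^[k] (P j)).eval t)^2 := by
      intro j hj
      exact intervalIntegral.integral_congr_ae (haeq j hj)
    have hint : ∀ j, j < n → IntervalIntegrable (fun t => (iteratedDeriv k u t)^2)
        volume (x j) (x (j+1)) := by
      intro j hj
      apply IntervalIntegrable.congr_ae
        (((Polynomial.derivative^[k] (P j)).continuous.pow 2).intervalIntegrable (x j) (x (j+1)))
      have := ae_restrict_of_ae (μ := volume) (s := Set.uIoc (x j) (x (j+1))) (haeq j hj)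
      filter_upwards [this, ae_restrict_mem measurableSet_uIoc] with t h1 h2
      exact (h1 h2).symm
    have hsum := intervalIntegral.sum_integral_adjacent_intervals
      (f := fun t => (iteratedDeriv k u t)^2) (μ := volume) (a := x) (n := n)
      (fun j hj => hint j hj)
    calc (∫ t in Ioo a b, (iteratedDeriv k u t)^2)
        = ∫ t in Ioc a b, (iteratedDeriv k u t)^2 := (integral_Ioc_eq_integral_Ioo).symm
      _ = ∫ t in a..b, (iteratedDeriv k u t)^2 := (intervalIntegral.integral_of_le hab.le).symm
      _ = ∫ t in (x 0)..(x n), (iteratedDeriv k u t)^2 := by rw [hx0, hxn]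
      _ = ∑ j ∈ Finset.range n, ∫ t in x j..x (j+1), (iteratedDeriv k u t)^2 := hsum.symm
      _ = ∑ j ∈ Finset.range n, ∫ t in x j..x (j+1),
            ((Polynomial.derivative^[k] (P j)).eval t)^2 := by
          apply Finset.sum_congr rfl
          intro j hj
          exact hpiece j (Finset.mem_range.mp hj)
  -- one-sided limits of iterated derivatives within [a,b]
  have hlim : ∀ k, k ≤ p - 1 → ∀ j, j < n →
      iteratedDerivWithin k u (Icc a b) (x j) = (Polynomial.derivative^[k] (P j)).eval (x j)
      ∧ iteratedDerivWithin k u (Icc a b) (x (j+1))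
          = (Polynomial.derivative^[k] (P j)).eval (x (j+1)) := by
    intro k hk j hj
    set g := iteratedDerivWithin k u (Icc a b) with hgdef
    have hgc : ContinuousOn g (Icc a b) := by
      apply hsmooth.continuousOn_iteratedDerivWithin _ (uniqueDiffOn_Icc hab)
      exact_mod_cast hk
    have hsub : Ioo (x j) (x (j+1)) ⊆ Icc a b := by
      intro t ht
      exact ⟨le_trans (hxa j) ht.1.le, le_trans ht.2.le (hxb (j+1) hj)⟩
    have hgin : ∀ t ∈ Ioo (x j) (x (j+1)), g t = (Polynomial.derivative^[k] (P j)).eval t := by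
      intro t ht
      have hmem : Icc a b ∈ 𝓝 t :=
        Icc_mem_nhds (lt_of_le_of_lt (hxa j) ht.1) (lt_of_lt_of_le ht.2 (hxb (j+1) hj))
      have h1 : g t = iteratedDeriv k u t := by
        rw [hgdef, iteratedDerivWithin_eq_iteratedFDerivWithin, iteratedDeriv_eq_iteratedFDeriv,
          ← univ_inter (Icc a b), iteratedFDerivWithin_inter hmem, iteratedFDerivWithin_univ]
      rw [h1, hderiv k j hj t ht]
    have hpolyten : ∀ z : ℝ, Filter.Tendsto g (𝓝[Ioo (x j) (x (j+1))] z)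
        (𝓝 ((Polynomial.derivative^[k] (P j)).eval z)) := by
      intro z
      apply Filter.Tendsto.congr'
        (Filter.eventuallyEq_of_mem self_mem_nhdsWithin (fun t ht => (hgin t ht).symm))
      exact (((Polynomial.derivative^[k] (P j)).continuous).tendsto z).mono_left nhdsWithin_le_nhds
    constructor
    · have hne : (𝓝[Ioo (x j) (x (j+1))] (x j)).NeBot := left_nhdsWithin_Ioo_neBot (hxlt j)
      have ht1 : Filter.Tendsto g (𝓝[Ioo (x j) (x (j+1))] (x j)) (𝓝 (g (x j))) :=
        (hgc (x j) ⟨hxa j, hxb j (by omega)⟩).tendsto.mono_left (nhdsWithin_mono _ hsub)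
      exact tendsto_nhds_unique ht1 (hpolyten (x j))
    · have hne : (𝓝[Ioo (x j) (x (j+1))] (x (j+1))).NeBot := right_nhdsWithin_Ioo_neBot (hxlt j)
      have ht1 : Filter.Tendsto g (𝓝[Ioo (x j) (x (j+1))] (x (j+1))) (𝓝 (g (x (j+1)))) :=
        (hgc (x (j+1)) ⟨hxa (j+1), hxb (j+1) hj⟩).tendsto.mono_left (nhdsWithin_mono _ hsub)
      exact tendsto_nhds_unique ht1 (hpolyten (x (j+1)))
  -- interface conditions
  have hiface : ∀ j, j + 1 < n → ∀ k, k < p →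
      (Polynomial.derivative^[k] (P j)).eval (a + (j+1 : ℕ) * h)
        = (Polynomial.derivative^[k] (P (j+1))).eval (a + (j+1 : ℕ) * h) := by
    intro j hj1 k hk
    have e1 := (hlim k (by omega) j (by omega)).2
    have e2 := (hlim k (by omega) (j+1) hj1).1
    have : x (j+1) = a + (j+1 : ℕ) * h := rfl
    rw [this] at e1 e2
    rw [← e1, ← e2]
  -- boundary conditions
  have hbca : ∀ l, 2*l + q < p → (Polynomial.derivative^[2*l+q] (P 0)).eval a = 0 := by
    intro l hl
    have h0 := (hbc l hl).1
    have e := (hlim (2*l+q) (by omega) 0 hn).1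
    rw [hx0] at e
    rw [← e]
    exact h0
  have hbcb : ∀ l, 2*l + q < p →
      (Polynomial.derivative^[2*l+q] (P (n-1))).eval (a + (n : ℕ) * h) = 0 := by
    intro l hl
    have h0 := (hbc l hl).2
    have e := (hlim (2*l+q) (by omega) (n-1) (by omega)).2
    have hxx : x ((n-1)+1) = a + (n : ℕ) * h := by
      rw [show (n-1)+1 = n from by omega]
    have hxb' : x ((n-1)+1) = b := by
      rw [show (n-1)+1 = n from by omega, hxn]
    rw [hxx] at e
    rw [← e, show a + (n:ℝ) * h = b from by linarith]
    exact h0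
  -- apply the polynomial lemma
  have hkey := key_poly a h hh n p q hn hp hq hqp P hdeg hiface hbca hbcb
  -- conclude
  have hS1 : L2 a b (iteratedDeriv q u)
      = Real.sqrt (∑ j ∈ Finset.range n, ∫ t in x j..x (j+1),
          ((Polynomial.derivative^[q] (P j)).eval t)^2) := by
    rw [L2, hdecomp q]
  have hS2 : L2 a b (iteratedDeriv (q-1) u)
      = Real.sqrt (∑ j ∈ Finset.range n, ∫ t in x j..x (j+1),
          ((Polynomial.derivative^[q-1] (P j)).eval t)^2) := by
    rw [L2, hdecomp (q-1)]
  set Sq := ∑ j ∈ Finset.range n, ∫ t in x j..x (j+1),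
      ((Polynomial.derivative^[q] (P j)).eval t)^2 with hSqdef
  set Sq1 := ∑ j ∈ Finset.range n, ∫ t in x j..x (j+1),
      ((Polynomial.derivative^[q-1] (P j)).eval t)^2 with hSq1def
  have hkey' : Sq ≤ 12 / h^2 * Sq1 := hkey
  rw [hS1, hS2]
  have h1 : Real.sqrt Sq ≤ Real.sqrt (12 / h^2 * Sq1) := Real.sqrt_le_sqrt hkey'
  have h2 : Real.sqrt (12 / h^2 * Sq1) = Real.sqrt (12 / h^2) * Real.sqrt Sq1 :=
    Real.sqrt_mul (by positivity) _
  have h3 : Real.sqrt (12 / h^2) = 2 * Real.sqrt 3 * h⁻¹ := by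
    rw [show (12:ℝ)/h^2 = (2 * Real.sqrt 3 * h⁻¹)^2 by
      have hs : Real.sqrt 3 ^ 2 = 3 := Real.sq_sqrt (by norm_num)
      have e : (2 * Real.sqrt 3 * h⁻¹)^2 = 4 * (Real.sqrt 3 ^ 2) * (h⁻¹)^2 := by ring
      rw [e, hs, inv_pow]
      field_simp
      norm_num]
    exact Real.sqrt_sq (by positivity)
  calc Real.sqrt Sq ≤ Real.sqrt (12 / h^2 * Sq1) := h1
    _ = (2 * Real.sqrt 3 * h⁻¹) * Real.sqrt Sq1 := by rw [h2, h3]
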